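/- With the setup of the best-of-n policy on a finite set with injective rewards, the gap satisfies log(n) − (n−1)/n − KL(π⁽ⁿ⁾ ‖ p) = Σ_y g_n(F⁻(y), F(y)), where g_n(a,b) = (bⁿ − aⁿ) log(n(b−a)/(bⁿ − aⁿ)) + (n−1)(bⁿ log b − aⁿ log a) − ((n−1)/n)(bⁿ − aⁿ). -/
import Mathlib


open Finset Real

lemma telescope_aux {Y : Type*} [DecidableEq Y] (p r : Y → ℝ)
    (hr : Function.Injective r) (f : ℝ → ℝ) (s : Finset Y) :
    ∑ y ∈ s, (f (∑ z ∈ s.filter (fun z => r z ≤ r y), p z)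
      - f (∑ z ∈ s.filter (fun z => r z < r y), p z))
      = f (∑ z ∈ s, p z) - f 0 := by
  induction s using Finset.strongInduction with
  | _ s ih =>
    rcases s.eq_empty_or_nonempty with rfl | hs
    · simp
    obtain ⟨m, hm, hmax⟩ := s.exists_max_image r hs
    have hlt : ∀ a ∈ s, a ≠ m → r a < r m := fun a ha hne =>
      lt_of_le_of_ne (hmax a ha) (fun h => hne (hr h))
    have h1 : s.filter (fun z => r z ≤ r m) = s :=
      Finset.filter_eq_self.2 fun z hz => hmax z hz
    have h2 : s.filter (fun z => r z < r m) = s.erase m := by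
      ext z
      simp only [Finset.mem_filter, Finset.mem_erase]
      constructor
      · rintro ⟨hz, hlt'⟩
        exact ⟨fun h => by simp [h] at hlt', hz⟩
      · rintro ⟨hne, hz⟩; exact ⟨hz, hlt z hz hne⟩
    have key : ∀ y ∈ s.erase m,
        (f (∑ z ∈ s.filter (fun z => r z ≤ r y), p z)
          - f (∑ z ∈ s.filter (fun z => r z < r y), p z))
        = (f (∑ z ∈ (s.erase m).filter (fun z => r z ≤ r y), p z)
          - f (∑ z ∈ (s.erase m).filter (fun z => r z < r y), p z)) := by
      intro y hy
      obtain ⟨hne, hys⟩ := Finset.mem_erase.1 hy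
      have hylt : r y < r m := hlt y hys hne
      have e1 : s.filter (fun z => r z ≤ r y)
          = (s.erase m).filter (fun z => r z ≤ r y) := by
        ext z
        simp only [Finset.mem_filter, Finset.mem_erase]
        constructor
        · rintro ⟨hz, h⟩
          refine ⟨⟨fun hzm => ?_, hz⟩, h⟩
          subst hzm; exact absurd h (not_le.2 hylt)
        · rintro ⟨⟨_, hz⟩, h⟩; exact ⟨hz, h⟩
      have e2 : s.filter (fun z => r z < r y)
          = (s.erase m).filter (fun z => r z < r y) := by
        ext z
        simp only [Finset.mem_filter, Finset.mem_erase]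
        constructor
        · rintro ⟨hz, h⟩
          refine ⟨⟨fun hzm => ?_, hz⟩, h⟩
          subst hzm; exact absurd h (not_lt.2 hylt.le)
        · rintro ⟨⟨_, hz⟩, h⟩; exact ⟨hz, h⟩
      rw [e1, e2]
    rw [← Finset.add_sum_erase s _ hm, h1, h2,
        Finset.sum_congr rfl key, ih (s.erase m) (Finset.erase_ssubset hm)]
    ring

theorem stmt_10
    {Y : Type*} [Fintype Y]
    (p : Y → ℝ) (r : Y → ℝ)
    (hp : ∀ y, 0 < p y) (hsum : ∑ y, p y = 1)
    (hr : Function.Injective r)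
    (n : ℕ) (hn : 1 ≤ n)
    (F Fm : Y → ℝ)
    (hF : ∀ y, F y = ∑ z ∈ Finset.univ.filter (fun z => r z ≤ r y), p z)
    (hFm : ∀ y, Fm y = ∑ z ∈ Finset.univ.filter (fun z => r z < r y), p z) :
    (Real.log n - ((n : ℝ) - 1) / n) -
      ∑ y : Y, (F y ^ n - Fm y ^ n) * Real.log ((F y ^ n - Fm y ^ n) / p y) =
      ∑ y : Y,
        ((F y ^ n - Fm y ^ n) *
            Real.log ((n : ℝ) * (F y - Fm y) / (F y ^ n - Fm y ^ n)) +
          ((n : ℝ) - 1) * (F y ^ n * Real.log (F y) - Fm y ^ n * Real.log (Fm y)) -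
          (((n : ℝ) - 1) / n) * (F y ^ n - Fm y ^ n)) := by
  classical
  have hnpos : (0 : ℝ) < (n : ℝ) := by exact_mod_cast Nat.lt_of_lt_of_le Nat.zero_lt_one hn
  have hn0 : (n : ℝ) ≠ 0 := hnpos.ne'
  have hFm_nonneg : ∀ y, 0 ≤ Fm y := by
    intro y; rw [hFm]
    exact Finset.sum_nonneg fun z _ => (hp z).le
  have hstep : ∀ y, F y = Fm y + p y := by
    intro y; rw [hF, hFm]
    have hins : Finset.univ.filter (fun z => r z ≤ r y)
        = insert y (Finset.univ.filter (fun z => r z < r y)) := by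
      ext z
      simp only [Finset.mem_filter, Finset.mem_insert, Finset.mem_univ, true_and]
      constructor
      · intro h
        rcases lt_or_eq_of_le h with h | h
        · exact Or.inr h
        · exact Or.inl (hr h)
      · rintro (rfl | h)
        · exact le_refl _
        · exact h.le
    rw [hins, Finset.sum_insert (by simp)]
    ring
  have hD : ∀ y, 0 < F y ^ n - Fm y ^ n := by
    intro y
    have h1 : Fm y < F y := by
      have := hp y; rw [hstep y]; linarith
    have := pow_lt_pow_left₀ h1 (hFm_nonneg y) (by omega : n ≠ 0)
    linarith
  have ht : ∀ f : ℝ → ℝ, ∑ y, (f (F y) - f (Fm y)) = f 1 - f 0 := by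
    intro f
    have h := telescope_aux p r hr f Finset.univ
    rw [hsum] at h
    rw [← h]
    exact Finset.sum_congr rfl fun y _ => by rw [hF, hFm]
  have ht1 : ∑ y, (F y ^ n - Fm y ^ n) = 1 := by
    have := ht (fun x => x ^ n)
    simpa [zero_pow (by omega : n ≠ 0)] using this
  have ht2 : ∑ y, (F y ^ n * Real.log (F y) - Fm y ^ n * Real.log (Fm y)) = 0 := by
    have := ht (fun x => x ^ n * Real.log x)
    simpa [zero_pow (by omega : n ≠ 0)] using this
  have hlog : ∀ y, (F y ^ n - Fm y ^ n) *
      Real.log ((n : ℝ) * (F y - Fm y) / (F y ^ n - Fm y ^ n))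
      = (F y ^ n - Fm y ^ n) * Real.log n
        - (F y ^ n - Fm y ^ n) * Real.log ((F y ^ n - Fm y ^ n) / p y) := by
    intro y
    have hp' := hp y
    have hD' := hD y
    have hFp : F y - Fm y = p y := by
      have := hstep y; linarith
    rw [hFp, Real.log_div (by positivity) hD'.ne', Real.log_mul hn0 hp'.ne',
        Real.log_div hD'.ne' hp'.ne']
    ring
  have hsplit : ∑ y : Y,
        ((F y ^ n - Fm y ^ n) *
            Real.log ((n : ℝ) * (F y - Fm y) / (F y ^ n - Fm y ^ n)) +
          ((n : ℝ) - 1) * (F y ^ n * Real.log (F y) - Fm y ^ n * Real.log (Fm y)) -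
          (((n : ℝ) - 1) / n) * (F y ^ n - Fm y ^ n))
      = (∑ y, (F y ^ n - Fm y ^ n)) * Real.log n
        - ∑ y : Y, (F y ^ n - Fm y ^ n) * Real.log ((F y ^ n - Fm y ^ n) / p y)
        + ((n : ℝ) - 1) * (∑ y, (F y ^ n * Real.log (F y) - Fm y ^ n * Real.log (Fm y)))
        - (((n : ℝ) - 1) / n) * ∑ y, (F y ^ n - Fm y ^ n) := by
    rw [Finset.sum_mul, Finset.mul_sum, Finset.mul_sum, ← Finset.sum_sub_distrib,
        ← Finset.sum_add_distrib, ← Finset.sum_sub_distrib]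
    exact Finset.sum_congr rfl fun y _ => by rw [hlog y]
  rw [hsplit, ht1, ht2]
  ring
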